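/- Let U ∈ ℝ and μ ≥ 0. Let φ be a twice continuously differentiable function of (t,x,z) ∈ ℝ × ℝ × [0,∞) such that there is a compact set K ⊂ ℝ² with φ(t,·,·) supported in K for every t, and suppose φ satisfies the convected wave equation (∂_t + U∂ₓ)²φ = Δφ − μφ on ℝ × ℝ × (0,∞). Set ψ = ∂_tφ + U∂ₓφ and define the flow energy E_f(t) = ½ ∫_{ℝ×(0,∞)} ( ψ(t,x,z)² + |∂ₓφ(t,x,z)|² + |∂_zφ(t,x,z)|² + μ φ(t,x,z)² ) dx dz. Then E_f is differentiable in t and E_f'(t) = −∫_ℝ ∂_zφ(t,x,0) · ψ(t,x,0) dx for every t. -/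

import Mathlib

open MeasureTheory Real Set

/-- The open upper half-plane `ℝ²₊ = ℝ × (0,∞)`, as a subset of `ℝ × ℝ`. -/
def upperHalfPlane2 : Set (ℝ × ℝ) := {p : ℝ × ℝ | 0 < p.2}

/-- Partial derivative in the time variable `t` of `f : (t,x,z) ↦ f(t,x,z)`. -/
noncomputable def pT (f : ℝ × ℝ × ℝ → ℝ) : ℝ × ℝ × ℝ → ℝ :=
  fun p => deriv (fun t => f (t, p.2.1, p.2.2)) p.1

/-- Partial derivative in the horizontal variable `x` of `f : (t,x,z) ↦ f(t,x,z)`. -/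
noncomputable def pX3 (f : ℝ × ℝ × ℝ → ℝ) : ℝ × ℝ × ℝ → ℝ :=
  fun p => deriv (fun x => f (p.1, x, p.2.2)) p.2.1

/-- Partial derivative in the vertical variable `z` of `f : (t,x,z) ↦ f(t,x,z)`. -/
noncomputable def pZ3 (f : ℝ × ℝ × ℝ → ℝ) : ℝ × ℝ × ℝ → ℝ :=
  fun p => deriv (fun z => f (p.1, p.2.1, z)) p.2.2

-- curves
lemma hasDerivAt_curveT (x z t : ℝ) :
    HasDerivAt (fun τ : ℝ => ((τ, x, z) : ℝ × ℝ × ℝ)) (1, 0, 0) t :=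
  (hasDerivAt_id t).prodMk ((hasDerivAt_const t x).prodMk (hasDerivAt_const t z))

lemma hasDerivAt_curveX (t z x : ℝ) :
    HasDerivAt (fun ξ : ℝ => ((t, ξ, z) : ℝ × ℝ × ℝ)) (0, 1, 0) x :=
  (hasDerivAt_const x t).prodMk ((hasDerivAt_id x).prodMk (hasDerivAt_const x z))

lemma hasDerivAt_curveZ (t x z : ℝ) :
    HasDerivAt (fun ζ : ℝ => ((t, x, ζ) : ℝ × ℝ × ℝ)) (0, 0, 1) z :=
  (hasDerivAt_const z t).prodMk ((hasDerivAt_const z x).prodMk (hasDerivAt_id z))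

lemma hasDerivAt_pT {f : ℝ × ℝ × ℝ → ℝ} (hf : DifferentiableAt ℝ f p) :
    HasDerivAt (fun τ => f (τ, p.2.1, p.2.2)) (pT f p) p.1 := by
  have h := hf.hasFDerivAt.comp_hasDerivAt p.1 (hasDerivAt_curveT p.2.1 p.2.2 p.1)
  exact h.differentiableAt.hasDerivAt

lemma hasDerivAt_pX3 {f : ℝ × ℝ × ℝ → ℝ} (hf : DifferentiableAt ℝ f p) :
    HasDerivAt (fun ξ => f (p.1, ξ, p.2.2)) (pX3 f p) p.2.1 := by
  have h := hf.hasFDerivAt.comp_hasDerivAt p.2.1 (hasDerivAt_curveX p.1 p.2.2 p.2.1)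
  exact h.differentiableAt.hasDerivAt

lemma hasDerivAt_pZ3 {f : ℝ × ℝ × ℝ → ℝ} (hf : DifferentiableAt ℝ f p) :
    HasDerivAt (fun ζ => f (p.1, p.2.1, ζ)) (pZ3 f p) p.2.2 := by
  have h := hf.hasFDerivAt.comp_hasDerivAt p.2.2 (hasDerivAt_curveZ p.1 p.2.1 p.2.2)
  exact h.differentiableAt.hasDerivAt

lemma pT_eq_fderiv {f : ℝ × ℝ × ℝ → ℝ} (hf : DifferentiableAt ℝ f p) :
    pT f p = fderiv ℝ f p (1, 0, 0) :=
  (hf.hasFDerivAt.comp_hasDerivAt p.1 (hasDerivAt_curveT p.2.1 p.2.2 p.1)).deriv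

lemma pX3_eq_fderiv {f : ℝ × ℝ × ℝ → ℝ} (hf : DifferentiableAt ℝ f p) :
    pX3 f p = fderiv ℝ f p (0, 1, 0) :=
  (hf.hasFDerivAt.comp_hasDerivAt p.2.1 (hasDerivAt_curveX p.1 p.2.2 p.2.1)).deriv

lemma pZ3_eq_fderiv {f : ℝ × ℝ × ℝ → ℝ} (hf : DifferentiableAt ℝ f p) :
    pZ3 f p = fderiv ℝ f p (0, 0, 1) :=
  (hf.hasFDerivAt.comp_hasDerivAt p.2.2 (hasDerivAt_curveZ p.1 p.2.1 p.2.2)).deriv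

lemma contDiff_fderiv_apply {n m : WithTop ℕ∞} {f : ℝ × ℝ × ℝ → ℝ} (v : ℝ × ℝ × ℝ)
    (hf : ContDiff ℝ n f) (h : m + 1 ≤ n) :
    ContDiff ℝ m (fun p => fderiv ℝ f p v) :=
  ((ContinuousLinearMap.apply ℝ ℝ v).contDiff).comp (hf.fderiv_right h)

lemma contDiff_pT {f : ℝ × ℝ × ℝ → ℝ} (hf : ContDiff ℝ 2 f) : ContDiff ℝ 1 (pT f) := by
  have hd : Differentiable ℝ f := hf.differentiable two_ne_zero
  have : pT f = fun p => fderiv ℝ f p (1, 0, 0) := funext fun p => pT_eq_fderiv (hd p)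
  rw [this]; exact contDiff_fderiv_apply _ hf (by norm_num)

lemma contDiff_pX3 {f : ℝ × ℝ × ℝ → ℝ} (hf : ContDiff ℝ 2 f) : ContDiff ℝ 1 (pX3 f) := by
  have hd : Differentiable ℝ f := hf.differentiable two_ne_zero
  have : pX3 f = fun p => fderiv ℝ f p (0, 1, 0) := funext fun p => pX3_eq_fderiv (hd p)
  rw [this]; exact contDiff_fderiv_apply _ hf (by norm_num)

lemma contDiff_pZ3 {f : ℝ × ℝ × ℝ → ℝ} (hf : ContDiff ℝ 2 f) : ContDiff ℝ 1 (pZ3 f) := by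
  have hd : Differentiable ℝ f := hf.differentiable two_ne_zero
  have : pZ3 f = fun p => fderiv ℝ f p (0, 0, 1) := funext fun p => pZ3_eq_fderiv (hd p)
  rw [this]; exact contDiff_fderiv_apply _ hf (by norm_num)

lemma continuous_pT {f : ℝ × ℝ × ℝ → ℝ} (hf : ContDiff ℝ 1 f) : Continuous (pT f) := by
  have hd : Differentiable ℝ f := hf.differentiable one_ne_zero
  have : pT f = fun p => fderiv ℝ f p (1, 0, 0) := funext fun p => pT_eq_fderiv (hd p)
  rw [this]; exact (contDiff_fderiv_apply (m := 0) _ hf (by norm_num)).continuous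

lemma continuous_pX3 {f : ℝ × ℝ × ℝ → ℝ} (hf : ContDiff ℝ 1 f) : Continuous (pX3 f) := by
  have hd : Differentiable ℝ f := hf.differentiable one_ne_zero
  have : pX3 f = fun p => fderiv ℝ f p (0, 1, 0) := funext fun p => pX3_eq_fderiv (hd p)
  rw [this]; exact (contDiff_fderiv_apply (m := 0) _ hf (by norm_num)).continuous

lemma continuous_pZ3 {f : ℝ × ℝ × ℝ → ℝ} (hf : ContDiff ℝ 1 f) : Continuous (pZ3 f) := by
  have hd : Differentiable ℝ f := hf.differentiable one_ne_zero
  have : pZ3 f = fun p => fderiv ℝ f p (0, 0, 1) := funext fun p => pZ3_eq_fderiv (hd p)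
  rw [this]; exact (contDiff_fderiv_apply (m := 0) _ hf (by norm_num)).continuous

lemma pT_zero_of_nmem {f : ℝ × ℝ × ℝ → ℝ} {K : Set (ℝ × ℝ)}
    (hs : ∀ t x z : ℝ, (x, z) ∉ K → f (t, x, z) = 0) {t x z : ℝ} (h : (x, z) ∉ K) :
    pT f (t, x, z) = 0 := by
  have hfun : (fun τ => f (τ, x, z)) = fun _ => (0 : ℝ) := funext fun τ => hs τ x z h
  show deriv (fun τ => f (τ, x, z)) t = 0
  rw [hfun, deriv_const]

lemma pX3_zero_of_nmem {f : ℝ × ℝ × ℝ → ℝ} {K : Set (ℝ × ℝ)} (hK : IsClosed K)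
    (hs : ∀ t x z : ℝ, (x, z) ∉ K → f (t, x, z) = 0) {t x z : ℝ} (h : (x, z) ∉ K) :
    pX3 f (t, x, z) = 0 := by
  obtain ⟨ε, εpos, hball⟩ := Metric.isOpen_iff.1 hK.isOpen_compl (x, z) h
  have hev : (fun ξ => f (t, ξ, z)) =ᶠ[nhds x] fun _ => (0 : ℝ) := by
    filter_upwards [Metric.ball_mem_nhds x εpos] with ξ hξ
    refine hs t ξ z (hball ?_)
    rw [Metric.mem_ball] at hξ ⊢
    rw [Prod.dist_eq]
    simpa [dist_self] using max_lt hξ εpos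
  show deriv (fun ξ => f (t, ξ, z)) x = 0
  rw [hev.deriv_eq, deriv_const]

lemma pZ3_zero_of_nmem {f : ℝ × ℝ × ℝ → ℝ} {K : Set (ℝ × ℝ)} (hK : IsClosed K)
    (hs : ∀ t x z : ℝ, (x, z) ∉ K → f (t, x, z) = 0) {t x z : ℝ} (h : (x, z) ∉ K) :
    pZ3 f (t, x, z) = 0 := by
  obtain ⟨ε, εpos, hball⟩ := Metric.isOpen_iff.1 hK.isOpen_compl (x, z) h
  have hev : (fun ζ => f (t, x, ζ)) =ᶠ[nhds z] fun _ => (0 : ℝ) := by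
    filter_upwards [Metric.ball_mem_nhds z εpos] with ζ hζ
    refine hs t x ζ (hball ?_)
    rw [Metric.mem_ball] at hζ ⊢
    rw [Prod.dist_eq]
    simpa [dist_self] using max_lt εpos hζ
  show deriv (fun ζ => f (t, x, ζ)) z = 0
  rw [hev.deriv_eq, deriv_const]

lemma clairaut {f : ℝ × ℝ × ℝ → ℝ} (hf : ContDiff ℝ 2 f) (p v w : ℝ × ℝ × ℝ) :
    fderiv ℝ (fun q => fderiv ℝ f q w) p v = fderiv ℝ (fun q => fderiv ℝ f q v) p w := by
  have hd : Differentiable ℝ f := hf.differentiable two_ne_zero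
  have h1 : ∀ y, HasFDerivAt f (fderiv ℝ f y) y := fun y => (hd y).hasFDerivAt
  have hC1 : ContDiff ℝ 1 (fderiv ℝ f) := hf.fderiv_right (by norm_num)
  have h2 : HasFDerivAt (fderiv ℝ f) (fderiv ℝ (fderiv ℝ f) p) p :=
    (hC1.differentiable one_ne_zero p).hasFDerivAt
  have hsym := second_derivative_symmetric h1 h2 v w
  have hw : fderiv ℝ (fun q => fderiv ℝ f q w) p =
      (ContinuousLinearMap.apply ℝ ℝ w).comp (fderiv ℝ (fderiv ℝ f) p) :=
    ((ContinuousLinearMap.apply ℝ ℝ w).hasFDerivAt.comp p h2).fderiv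
  have hv : fderiv ℝ (fun q => fderiv ℝ f q v) p =
      (ContinuousLinearMap.apply ℝ ℝ v).comp (fderiv ℝ (fderiv ℝ f) p) :=
    ((ContinuousLinearMap.apply ℝ ℝ v).hasFDerivAt.comp p h2).fderiv
  rw [hw, hv]
  exact hsym

lemma pT_pX3_comm {f : ℝ × ℝ × ℝ → ℝ} (hf : ContDiff ℝ 2 f) (p : ℝ × ℝ × ℝ) :
    pT (pX3 f) p = pX3 (pT f) p := by
  have hd : Differentiable ℝ f := hf.differentiable two_ne_zero
  have e1 : pX3 f = fun q => fderiv ℝ f q (0, 1, 0) := funext fun q => pX3_eq_fderiv (hd q)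
  have e2 : pT f = fun q => fderiv ℝ f q (1, 0, 0) := funext fun q => pT_eq_fderiv (hd q)
  rw [pT_eq_fderiv ((contDiff_pX3 hf).differentiable one_ne_zero p),
    pX3_eq_fderiv ((contDiff_pT hf).differentiable one_ne_zero p), e1, e2]
  exact clairaut hf p _ _

lemma pT_pZ3_comm {f : ℝ × ℝ × ℝ → ℝ} (hf : ContDiff ℝ 2 f) (p : ℝ × ℝ × ℝ) :
    pT (pZ3 f) p = pZ3 (pT f) p := by
  have hd : Differentiable ℝ f := hf.differentiable two_ne_zero
  have e1 : pZ3 f = fun q => fderiv ℝ f q (0, 0, 1) := funext fun q => pZ3_eq_fderiv (hd q)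
  have e2 : pT f = fun q => fderiv ℝ f q (1, 0, 0) := funext fun q => pT_eq_fderiv (hd q)
  rw [pT_eq_fderiv ((contDiff_pZ3 hf).differentiable one_ne_zero p),
    pZ3_eq_fderiv ((contDiff_pT hf).differentiable one_ne_zero p), e1, e2]
  exact clairaut hf p _ _

lemma pX3_pZ3_comm {f : ℝ × ℝ × ℝ → ℝ} (hf : ContDiff ℝ 2 f) (p : ℝ × ℝ × ℝ) :
    pX3 (pZ3 f) p = pZ3 (pX3 f) p := by
  have hd : Differentiable ℝ f := hf.differentiable two_ne_zero
  have e1 : pZ3 f = fun q => fderiv ℝ f q (0, 0, 1) := funext fun q => pZ3_eq_fderiv (hd q)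
  have e2 : pX3 f = fun q => fderiv ℝ f q (0, 1, 0) := funext fun q => pX3_eq_fderiv (hd q)
  rw [pX3_eq_fderiv ((contDiff_pZ3 hf).differentiable one_ne_zero p),
    pZ3_eq_fderiv ((contDiff_pX3 hf).differentiable one_ne_zero p), e1, e2]
  exact clairaut hf p _ _

-- membership helpers
lemma nmem_of_absX {K : Set (ℝ × ℝ)} {R : ℝ} (hR : K ⊆ Metric.closedBall 0 R)
    {x z : ℝ} (hx : x ∉ Icc (-R) R) : (x, z) ∉ K := by
  intro hmem
  have := hR hmem
  rw [Metric.mem_closedBall, Prod.dist_eq] at this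
  simp only [Prod.fst_zero, Prod.snd_zero, dist_zero_right, Real.norm_eq_abs] at this
  exact hx (abs_le.1 (le_trans (le_max_left _ _) this))

lemma nmem_of_absZ {K : Set (ℝ × ℝ)} {R : ℝ} (hR : K ⊆ Metric.closedBall 0 R)
    {x z : ℝ} (hz : z ∉ Icc (-R) R) : (x, z) ∉ K := by
  intro hmem
  have := hR hmem
  rw [Metric.mem_closedBall, Prod.dist_eq] at this
  simp only [Prod.fst_zero, Prod.snd_zero, dist_zero_right, Real.norm_eq_abs] at this
  exact hz (abs_le.1 (le_trans (le_max_right _ _) this))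

lemma integral_pX3_eq_zero {f : ℝ × ℝ × ℝ → ℝ} {K : Set (ℝ × ℝ)} (hK : IsCompact K)
    (hf : ContDiff ℝ 1 f) (hs : ∀ t x z : ℝ, (x, z) ∉ K → f (t, x, z) = 0) (t z : ℝ) :
    ∫ x : ℝ, pX3 f (t, x, z) = 0 := by
  obtain ⟨R, hR⟩ := hK.isBounded.subset_closedBall 0
  have hd : Differentiable ℝ f := hf.differentiable one_ne_zero
  have hderiv : ∀ x : ℝ, HasDerivAt (fun x => f (t, x, z)) (pX3 f (t, x, z)) x :=
    fun x => hasDerivAt_pX3 (hd (t, x, z))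
  have hcont : Continuous fun x : ℝ => f (t, x, z) :=
    hf.continuous.comp (continuous_const.prodMk (continuous_id.prodMk continuous_const))
  have hcont' : Continuous fun x : ℝ => pX3 f (t, x, z) :=
    (continuous_pX3 hf).comp (continuous_const.prodMk (continuous_id.prodMk continuous_const))
  have hsupp1 : HasCompactSupport fun x : ℝ => f (t, x, z) :=
    HasCompactSupport.intro isCompact_Icc fun x hx => hs t x z (nmem_of_absX hR hx)
  have hsupp2 : HasCompactSupport fun x : ℝ => pX3 f (t, x, z) :=
    HasCompactSupport.intro isCompact_Icc fun x hx =>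
      pX3_zero_of_nmem hK.isClosed hs (nmem_of_absX hR hx)
  exact integral_eq_zero_of_hasDerivAt_of_integrable hderiv
    (hcont'.integrable_of_hasCompactSupport hsupp2)
    (hcont.integrable_of_hasCompactSupport hsupp1)

lemma integral_Ioi_pZ3 {f : ℝ × ℝ × ℝ → ℝ} {K : Set (ℝ × ℝ)} (hK : IsCompact K)
    (hf : ContDiff ℝ 1 f) (hs : ∀ t x z : ℝ, (x, z) ∉ K → f (t, x, z) = 0) (t x : ℝ) :
    ∫ z in Ioi (0 : ℝ), pZ3 f (t, x, z) = -f (t, x, 0) := by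
  obtain ⟨R, hR⟩ := hK.isBounded.subset_closedBall 0
  have hC1 : ContDiff ℝ 1 fun z : ℝ => f (t, x, z) :=
    hf.comp (contDiff_const.prodMk (contDiff_const.prodMk contDiff_id))
  have hcs : HasCompactSupport fun z : ℝ => f (t, x, z) :=
    HasCompactSupport.intro isCompact_Icc fun z hz => hs t x z (nmem_of_absZ hR hz)
  exact HasCompactSupport.integral_Ioi_deriv_eq hC1 hcs 0

noncomputable def Gaux (μ : ℝ) (φ ψ : ℝ × ℝ × ℝ → ℝ) : ℝ × ℝ × ℝ → ℝ :=
  fun p => ψ p ^ 2 + pX3 φ p ^ 2 + pZ3 φ p ^ 2 + μ * φ p ^ 2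

noncomputable def Gaux' (μ : ℝ) (φ ψ : ℝ × ℝ × ℝ → ℝ) : ℝ × ℝ × ℝ → ℝ :=
  fun p => 2 * (ψ p * pT ψ p + pX3 φ p * pT (pX3 φ) p + pZ3 φ p * pT (pZ3 φ) p
    + μ * (φ p * pT φ p))

noncomputable def Aaux (U μ : ℝ) (φ ψ : ℝ × ℝ × ℝ → ℝ) : ℝ × ℝ × ℝ → ℝ :=
  fun p => ψ p * pX3 φ p - (U / 2) * Gaux μ φ ψ p

noncomputable def Baux (φ ψ : ℝ × ℝ × ℝ → ℝ) : ℝ × ℝ × ℝ → ℝ :=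
  fun p => ψ p * pZ3 φ p

lemma hasDerivAt_Gaux (μ : ℝ) {φ ψ : ℝ × ℝ × ℝ → ℝ} (hφ : ContDiff ℝ 2 φ)
    (hψC : ContDiff ℝ 1 ψ) (t x z : ℝ) :
    HasDerivAt (fun τ => Gaux μ φ ψ (τ, x, z)) (Gaux' μ φ ψ (t, x, z)) t := by
  have hψd := hψC.differentiable one_ne_zero
  have hbx := (contDiff_pX3 hφ).differentiable one_ne_zero
  have hbz := (contDiff_pZ3 hφ).differentiable one_ne_zero
  have hφd := hφ.differentiable two_ne_zero
  have h1 : HasDerivAt (fun τ => ψ (τ, x, z)) (pT ψ (t, x, z)) t := hasDerivAt_pT (p := (t,x,z)) (hψd _)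
  have h2 : HasDerivAt (fun τ => pX3 φ (τ, x, z)) (pT (pX3 φ) (t, x, z)) t :=
    hasDerivAt_pT (p := (t,x,z)) (hbx _)
  have h3 : HasDerivAt (fun τ => pZ3 φ (τ, x, z)) (pT (pZ3 φ) (t, x, z)) t :=
    hasDerivAt_pT (p := (t,x,z)) (hbz _)
  have h4 : HasDerivAt (fun τ => φ (τ, x, z)) (pT φ (t, x, z)) t := hasDerivAt_pT (p := (t,x,z)) (hφd _)
  have h := (((h1.fun_pow 2).add (h2.fun_pow 2)).add (h3.fun_pow 2)).add ((h4.fun_pow 2).const_mul μ)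
  refine h.congr_deriv ?_
  simp only [Gaux']
  push_cast
  ring

lemma pX3_psi (U : ℝ) {φ ψ : ℝ × ℝ × ℝ → ℝ} (hφ : ContDiff ℝ 2 φ)
    (hψ : ∀ p, ψ p = pT φ p + U * pX3 φ p) (t x z : ℝ) :
    pX3 ψ (t, x, z) = pX3 (pT φ) (t, x, z) + U * pX3 (pX3 φ) (t, x, z) := by
  have ha := (contDiff_pT hφ).differentiable one_ne_zero
  have hb := (contDiff_pX3 hφ).differentiable one_ne_zero
  have h : HasDerivAt (fun ξ => pT φ (t, ξ, z) + U * pX3 φ (t, ξ, z))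
      (pX3 (pT φ) (t, x, z) + U * pX3 (pX3 φ) (t, x, z)) x :=
    (hasDerivAt_pX3 (p := (t,x,z)) (ha _)).add ((hasDerivAt_pX3 (p := (t,x,z)) (hb _)).const_mul U)
  have hfun : (fun ξ => ψ (t, ξ, z)) = fun ξ => pT φ (t, ξ, z) + U * pX3 φ (t, ξ, z) :=
    funext fun ξ => hψ _
  show deriv (fun ξ => ψ (t, ξ, z)) x = _
  rw [hfun]
  exact h.deriv

lemma pZ3_psi (U : ℝ) {φ ψ : ℝ × ℝ × ℝ → ℝ} (hφ : ContDiff ℝ 2 φ)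
    (hψ : ∀ p, ψ p = pT φ p + U * pX3 φ p) (t x z : ℝ) :
    pZ3 ψ (t, x, z) = pZ3 (pT φ) (t, x, z) + U * pZ3 (pX3 φ) (t, x, z) := by
  have ha := (contDiff_pT hφ).differentiable one_ne_zero
  have hb := (contDiff_pX3 hφ).differentiable one_ne_zero
  have h : HasDerivAt (fun ζ => pT φ (t, x, ζ) + U * pX3 φ (t, x, ζ))
      (pZ3 (pT φ) (t, x, z) + U * pZ3 (pX3 φ) (t, x, z)) z :=
    (hasDerivAt_pZ3 (p := (t,x,z)) (ha _)).add ((hasDerivAt_pZ3 (p := (t,x,z)) (hb _)).const_mul U)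
  have hfun : (fun ζ => ψ (t, x, ζ)) = fun ζ => pT φ (t, x, ζ) + U * pX3 φ (t, x, ζ) :=
    funext fun ζ => hψ _
  show deriv (fun ζ => ψ (t, x, ζ)) z = _
  rw [hfun]
  exact h.deriv

lemma flux_id (U μ : ℝ) {φ ψ : ℝ × ℝ × ℝ → ℝ} (hφ : ContDiff ℝ 2 φ)
    (hψ : ∀ p, ψ p = pT φ p + U * pX3 φ p) (hψC : ContDiff ℝ 1 ψ) (t x z : ℝ)
    (hP : pT ψ (t, x, z) + U * pX3 ψ (t, x, z)
      = pX3 (pX3 φ) (t, x, z) + pZ3 (pZ3 φ) (t, x, z) - μ * φ (t, x, z)) :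
    Gaux' μ φ ψ (t, x, z)
      = 2 * (pX3 (Aaux U μ φ ψ) (t, x, z) + pZ3 (Baux φ ψ) (t, x, z)) := by
  have hψd := hψC.differentiable one_ne_zero
  have hbxd := (contDiff_pX3 hφ).differentiable one_ne_zero
  have hbzd := (contDiff_pZ3 hφ).differentiable one_ne_zero
  have hφd := hφ.differentiable two_ne_zero
  -- x-slice derivatives at (t,x,z)
  have hψx : HasDerivAt (fun ξ => ψ (t, ξ, z)) (pX3 ψ (t, x, z)) x := hasDerivAt_pX3 (p := (t,x,z)) (hψd _)
  have hbxx : HasDerivAt (fun ξ => pX3 φ (t, ξ, z)) (pX3 (pX3 φ) (t, x, z)) x :=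
    hasDerivAt_pX3 (p := (t,x,z)) (hbxd _)
  have hbzx : HasDerivAt (fun ξ => pZ3 φ (t, ξ, z)) (pX3 (pZ3 φ) (t, x, z)) x :=
    hasDerivAt_pX3 (p := (t,x,z)) (hbzd _)
  have hφx : HasDerivAt (fun ξ => φ (t, ξ, z)) (pX3 φ (t, x, z)) x := hasDerivAt_pX3 (p := (t,x,z)) (hφd _)
  have hA : HasDerivAt (fun ξ => Aaux U μ φ ψ (t, ξ, z))
      (pX3 ψ (t, x, z) * pX3 φ (t, x, z) + ψ (t, x, z) * pX3 (pX3 φ) (t, x, z)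
        - (U / 2) * (2 * ψ (t, x, z) * pX3 ψ (t, x, z)
          + 2 * pX3 φ (t, x, z) * pX3 (pX3 φ) (t, x, z)
          + 2 * pZ3 φ (t, x, z) * pX3 (pZ3 φ) (t, x, z)
          + μ * (2 * φ (t, x, z) * pX3 φ (t, x, z)))) x := by
    have h := (hψx.mul hbxx).sub
      (((((hψx.fun_pow 2).add (hbxx.fun_pow 2)).add (hbzx.fun_pow 2)).add
        ((hφx.fun_pow 2).const_mul μ)).const_mul (U / 2))
    refine h.congr_deriv ?_
    push_cast
    ring
  have hAx : pX3 (Aaux U μ φ ψ) (t, x, z) = _ := hA.deriv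
  -- z-slice derivatives
  have hψz : HasDerivAt (fun ζ => ψ (t, x, ζ)) (pZ3 ψ (t, x, z)) z := hasDerivAt_pZ3 (p := (t,x,z)) (hψd _)
  have hbzz : HasDerivAt (fun ζ => pZ3 φ (t, x, ζ)) (pZ3 (pZ3 φ) (t, x, z)) z :=
    hasDerivAt_pZ3 (p := (t,x,z)) (hbzd _)
  have hB : HasDerivAt (fun ζ => Baux φ ψ (t, x, ζ))
      (pZ3 ψ (t, x, z) * pZ3 φ (t, x, z) + ψ (t, x, z) * pZ3 (pZ3 φ) (t, x, z)) z :=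
    hψz.mul hbzz
  have hBz : pZ3 (Baux φ ψ) (t, x, z) = _ := hB.deriv
  rw [hBz, hAx]
  have e2 := pX3_psi U hφ hψ t x z
  have e3 := pZ3_psi U hφ hψ t x z
  have c1 := pT_pX3_comm hφ (t, x, z)
  have c2 := pT_pZ3_comm hφ (t, x, z)
  have c3 := pX3_pZ3_comm hφ (t, x, z)
  have hPT : pT ψ (t, x, z) = pX3 (pX3 φ) (t, x, z) + pZ3 (pZ3 φ) (t, x, z)
      - μ * φ (t, x, z) - U * pX3 ψ (t, x, z) := by linarith
  simp only [Gaux']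
  rw [hPT, c1, c2, e2, e3, c3]
  simp only [hψ]
  ring

set_option maxHeartbeats 1000000 in
/-- Let `U ∈ ℝ`, `μ ≥ 0`, and let `φ = φ(t,x,z)` be a twice continuously
differentiable, spatially compactly supported solution of the convected wave equation
`(∂_t + U∂ₓ)²φ = Δφ − μφ` on the half-plane `z > 0`.  With `ψ = ∂_tφ + U∂ₓφ` and the
flow energy `E_f(t) = ½ ∫_{ℝ×(0,∞)} (ψ² + |∂ₓφ|² + |∂_zφ|² + μφ²)`, the energy `E_f` is
differentiable and `E_f'(t) = −∫_ℝ ∂_zφ(t,x,0)·ψ(t,x,0) dx` for every `t`. -/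
theorem statement7
    (U μ : ℝ) (hμ : 0 ≤ μ)
    (φ : ℝ × ℝ × ℝ → ℝ) (hφ : ContDiff ℝ 2 φ)
    (K : Set (ℝ × ℝ)) (hK : IsCompact K)
    (hsupp : ∀ t x z : ℝ, (x, z) ∉ K → φ (t, x, z) = 0)
    (ψ : ℝ × ℝ × ℝ → ℝ) (hψ : ∀ p, ψ p = pT φ p + U * pX3 φ p)
    (hPDE : ∀ t x z : ℝ, 0 < z →
      pT ψ (t, x, z) + U * pX3 ψ (t, x, z)
        = pX3 (pX3 φ) (t, x, z) + pZ3 (pZ3 φ) (t, x, z) - μ * φ (t, x, z))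
    (Ef : ℝ → ℝ)
    (hEf : ∀ t : ℝ, Ef t = (1 / 2) * ∫ q in upperHalfPlane2,
      ((ψ (t, q.1, q.2)) ^ 2 + (pX3 φ (t, q.1, q.2)) ^ 2
        + (pZ3 φ (t, q.1, q.2)) ^ 2 + μ * (φ (t, q.1, q.2)) ^ 2)) :
    ∀ t : ℝ, HasDerivAt Ef (-(∫ x : ℝ, pZ3 φ (t, x, 0) * ψ (t, x, 0))) t := by
  intro t₀
  have hKc : IsClosed K := hK.isClosed
  have hφ1 : ContDiff ℝ 1 φ := hφ.of_le (by norm_num)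
  have hψC : ContDiff ℝ 1 ψ := by
    have h : ψ = fun p => pT φ p + U * pX3 φ p := funext hψ
    rw [h]; exact (contDiff_pT hφ).add (contDiff_const.mul (contDiff_pX3 hφ))
  -- support facts
  have hψ0 : ∀ t x z : ℝ, (x, z) ∉ K → ψ (t, x, z) = 0 := by
    intro t x z h
    rw [hψ, pT_zero_of_nmem hsupp h, pX3_zero_of_nmem hKc hsupp h]; ring
  have hG0 : ∀ t x z : ℝ, (x, z) ∉ K → Gaux μ φ ψ (t, x, z) = 0 := by
    intro t x z h
    simp only [Gaux]
    rw [hψ0 t x z h, pX3_zero_of_nmem hKc hsupp h, pZ3_zero_of_nmem hKc hsupp h,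
      hsupp t x z h]
    ring
  have hG'0 : ∀ t x z : ℝ, (x, z) ∉ K → Gaux' μ φ ψ (t, x, z) = 0 := by
    intro t x z h
    simp only [Gaux']
    rw [hψ0 t x z h, pX3_zero_of_nmem hKc hsupp h, pZ3_zero_of_nmem hKc hsupp h,
      hsupp t x z h]
    ring
  have hA0 : ∀ t x z : ℝ, (x, z) ∉ K → Aaux U μ φ ψ (t, x, z) = 0 := by
    intro t x z h
    simp only [Aaux]
    rw [hψ0 t x z h, pX3_zero_of_nmem hKc hsupp h, hG0 t x z h]; ring
  have hB0 : ∀ t x z : ℝ, (x, z) ∉ K → Baux φ ψ (t, x, z) = 0 := by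
    intro t x z h
    simp only [Baux]
    rw [hψ0 t x z h]; ring
  -- continuity / smoothness
  have hGcont : Continuous (Gaux μ φ ψ) := by
    unfold Gaux
    exact (((hψC.continuous.pow 2).add ((continuous_pX3 hφ1).pow 2)).add
      ((continuous_pZ3 hφ1).pow 2)).add (continuous_const.mul (hφ1.continuous.pow 2))
  have hG'cont : Continuous (Gaux' μ φ ψ) := by
    have h1 := hψC.continuous.mul (continuous_pT hψC)
    have h2 := (continuous_pX3 hφ1).mul (continuous_pT (contDiff_pX3 hφ))
    have h3 := (continuous_pZ3 hφ1).mul (continuous_pT (contDiff_pZ3 hφ))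
    have h4 : Continuous fun p : ℝ × ℝ × ℝ => μ * (φ p * pT φ p) :=
      continuous_const.mul (hφ1.continuous.mul (continuous_pT hφ1))
    unfold Gaux'
    exact continuous_const.mul (((h1.add h2).add h3).add h4)
  have hGC1 : ContDiff ℝ 1 (Gaux μ φ ψ) := by
    unfold Gaux
    exact (((hψC.pow 2).add ((contDiff_pX3 hφ).pow 2)).add ((contDiff_pZ3 hφ).pow 2)).add
      (contDiff_const.mul (hφ1.pow 2))
  have hAC1 : ContDiff ℝ 1 (Aaux U μ φ ψ) := by
    unfold Aaux
    exact (hψC.mul (contDiff_pX3 hφ)).sub (contDiff_const.mul hGC1)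
  have hBC1 : ContDiff ℝ 1 (Baux φ ψ) := by
    unfold Baux
    exact hψC.mul (contDiff_pZ3 hφ)
  -- measure-theoretic setup
  have hSopen : IsOpen upperHalfPlane2 := isOpen_lt continuous_const continuous_snd
  have hSmeas : MeasurableSet upperHalfPlane2 := hSopen.measurableSet
  have hSprod : upperHalfPlane2 = (univ : Set ℝ) ×ˢ Ioi (0 : ℝ) := by
    ext p; simp [upperHalfPlane2, Set.mem_prod, mem_Ioi]
  have hrest : (volume : Measure (ℝ × ℝ)).restrict upperHalfPlane2
      = (volume : Measure ℝ).prod ((volume : Measure ℝ).restrict (Ioi 0)) := by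
    rw [hSprod, MeasureTheory.Measure.volume_eq_prod, ← Measure.prod_restrict, Measure.restrict_univ]
  -- integrability of the various integrands
  have hGint : Integrable (fun q : ℝ × ℝ => Gaux μ φ ψ (t₀, q)) :=
    (hGcont.comp (continuous_const.prodMk continuous_id)).integrable_of_hasCompactSupport
      (HasCompactSupport.intro hK fun q hq => hG0 t₀ q.1 q.2 hq)
  have hpAcont : Continuous fun q : ℝ × ℝ => pX3 (Aaux U μ φ ψ) (t₀, q) :=
    (continuous_pX3 hAC1).comp (continuous_const.prodMk continuous_id)
  have hpAsupp : HasCompactSupport fun q : ℝ × ℝ => pX3 (Aaux U μ φ ψ) (t₀, q) :=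
    HasCompactSupport.intro hK fun q hq => pX3_zero_of_nmem hKc hA0 hq
  have hpBcont : Continuous fun q : ℝ × ℝ => pZ3 (Baux φ ψ) (t₀, q) :=
    (continuous_pZ3 hBC1).comp (continuous_const.prodMk continuous_id)
  have hpBsupp : HasCompactSupport fun q : ℝ × ℝ => pZ3 (Baux φ ψ) (t₀, q) :=
    HasCompactSupport.intro hK fun q hq => pZ3_zero_of_nmem hKc hB0 hq
  have hIA : Integrable (fun q : ℝ × ℝ => pX3 (Aaux U μ φ ψ) (t₀, q))
      ((volume : Measure ℝ).prod ((volume : Measure ℝ).restrict (Ioi 0))) := by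
    rw [← hrest]
    exact (hpAcont.integrable_of_hasCompactSupport hpAsupp).restrict
  have hIB : Integrable (fun q : ℝ × ℝ => pZ3 (Baux φ ψ) (t₀, q))
      ((volume : Measure ℝ).prod ((volume : Measure ℝ).restrict (Ioi 0))) := by
    rw [← hrest]
    exact (hpBcont.integrable_of_hasCompactSupport hpBsupp).restrict
  -- the two divergence-theorem computations
  have eA : (∫ q in upperHalfPlane2, pX3 (Aaux U μ φ ψ) (t₀, q)) = 0 := by
    have hm : (∫ q in upperHalfPlane2, pX3 (Aaux U μ φ ψ) (t₀, q))
        = ∫ q, pX3 (Aaux U μ φ ψ) (t₀, q)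
            ∂((volume : Measure ℝ).prod ((volume : Measure ℝ).restrict (Ioi 0))) := by
      rw [← hrest]
    rw [hm, integral_prod_symm _ hIA]
    have hz : ∀ z : ℝ, (∫ x : ℝ, pX3 (Aaux U μ φ ψ) (t₀, x, z)) = 0 :=
      fun z => integral_pX3_eq_zero hK hAC1 hA0 t₀ z
    simp_rw [hz]
    simp
  have eB : (∫ q in upperHalfPlane2, pZ3 (Baux φ ψ) (t₀, q))
      = -∫ x : ℝ, Baux φ ψ (t₀, x, 0) := by
    have hm : (∫ q in upperHalfPlane2, pZ3 (Baux φ ψ) (t₀, q))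
        = ∫ q, pZ3 (Baux φ ψ) (t₀, q)
            ∂((volume : Measure ℝ).prod ((volume : Measure ℝ).restrict (Ioi 0))) := by
      rw [← hrest]
    rw [hm, integral_prod _ hIB]
    have hx : ∀ x : ℝ, (∫ z in Ioi (0 : ℝ), pZ3 (Baux φ ψ) (t₀, x, z))
        = -Baux φ ψ (t₀, x, 0) := fun x => integral_Ioi_pZ3 hK hBC1 hB0 t₀ x
    simp_rw [hx]
    exact integral_neg _
  -- differentiation under the integral sign
  obtain ⟨C, hC⟩ := ((isCompact_Icc (a := t₀ - 1) (b := t₀ + 1)).prod hK).exists_bound_of_continuousOn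
    hG'cont.continuousOn
  have hFmeas : ∀ᶠ τ in nhds t₀, AEStronglyMeasurable (fun q : ℝ × ℝ => Gaux μ φ ψ (τ, q))
      ((volume : Measure (ℝ × ℝ)).restrict upperHalfPlane2) :=
    Filter.Eventually.of_forall fun τ =>
      (hGcont.comp (continuous_const.prodMk continuous_id)).aestronglyMeasurable
  have hFint : Integrable (fun q : ℝ × ℝ => Gaux μ φ ψ (t₀, q))
      ((volume : Measure (ℝ × ℝ)).restrict upperHalfPlane2) := hGint.restrict
  have hF'meas : AEStronglyMeasurable (fun q : ℝ × ℝ => Gaux' μ φ ψ (t₀, q))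
      ((volume : Measure (ℝ × ℝ)).restrict upperHalfPlane2) :=
    (hG'cont.comp (continuous_const.prodMk continuous_id)).aestronglyMeasurable
  have hbound : ∀ᵐ q ∂((volume : Measure (ℝ × ℝ)).restrict upperHalfPlane2),
      ∀ τ ∈ Metric.ball t₀ 1, ‖Gaux' μ φ ψ (τ, q)‖ ≤ K.indicator (fun _ => C) q := by
    refine Filter.Eventually.of_forall fun q τ hτ => ?_
    by_cases hq : q ∈ K
    · rw [indicator_of_mem hq]
      refine hC (τ, q) (Set.mem_prod.2 ⟨?_, hq⟩)
      rw [Metric.mem_ball, Real.dist_eq] at hτ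
      have h := abs_lt.1 hτ
      rw [Set.mem_Icc]
      constructor <;> linarith [h.1, h.2]
    · rw [indicator_of_notMem hq]
      have h0 : Gaux' μ φ ψ (τ, q) = 0 := hG'0 τ q.1 q.2 hq
      rw [h0]; simp
  have hbint : Integrable (K.indicator fun _ => C)
      ((volume : Measure (ℝ × ℝ)).restrict upperHalfPlane2) := by
    have h : Integrable (K.indicator fun _ => C) (volume : Measure (ℝ × ℝ)) := by
      rw [integrable_indicator_iff hK.measurableSet]
      exact integrableOn_const hK.measure_lt_top.ne
    exact h.restrict
  have hdiff : ∀ᵐ q ∂((volume : Measure (ℝ × ℝ)).restrict upperHalfPlane2),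
      ∀ τ ∈ Metric.ball t₀ 1,
        HasDerivAt (fun s => Gaux μ φ ψ (s, q)) (Gaux' μ φ ψ (τ, q)) τ :=
    Filter.Eventually.of_forall fun q τ _ => hasDerivAt_Gaux μ hφ hψC τ q.1 q.2
  have key := hasDerivAt_integral_of_dominated_loc_of_deriv_le (s := Metric.ball t₀ 1)
    (F := fun τ (q : ℝ × ℝ) => Gaux μ φ ψ (τ, q))
    (F' := fun τ (q : ℝ × ℝ) => Gaux' μ φ ψ (τ, q))
    (Metric.ball_mem_nhds t₀ one_pos) hFmeas hFint hF'meas hbound hbint hdiff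
  have hEfFun : Ef = fun τ => (1 / 2) * ∫ q in upperHalfPlane2, Gaux μ φ ψ (τ, q) := by
    funext τ; exact hEf τ
  rw [hEfFun]
  have hIA' : Integrable (fun q : ℝ × ℝ => pX3 (Aaux U μ φ ψ) (t₀, q))
      ((volume : Measure (ℝ × ℝ)).restrict upperHalfPlane2) := by
    rw [hrest]; exact hIA
  have hIB' : Integrable (fun q : ℝ × ℝ => pZ3 (Baux φ ψ) (t₀, q))
      ((volume : Measure (ℝ × ℝ)).restrict upperHalfPlane2) := by
    rw [hrest]; exact hIB
  have hval : -(∫ x : ℝ, pZ3 φ (t₀, x, 0) * ψ (t₀, x, 0))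
      = (1 / 2) * ∫ q in upperHalfPlane2, Gaux' μ φ ψ (t₀, q) := by
    have hcongr : (∫ q in upperHalfPlane2, Gaux' μ φ ψ (t₀, q))
        = ∫ q in upperHalfPlane2,
            2 * (pX3 (Aaux U μ φ ψ) (t₀, q) + pZ3 (Baux φ ψ) (t₀, q)) := by
      refine setIntegral_congr_fun hSmeas fun q hq => ?_
      exact flux_id U μ hφ hψ hψC t₀ q.1 q.2 (hPDE t₀ q.1 q.2 hq)
    rw [hcongr, integral_const_mul, integral_add hIA' hIB', eA, eB, zero_add]
    simp only [Baux]
    have hcomm : (fun x : ℝ => ψ (t₀, x, 0) * pZ3 φ (t₀, x, 0))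
        = fun x : ℝ => pZ3 φ (t₀, x, 0) * ψ (t₀, x, 0) := funext fun x => mul_comm _ _
    rw [hcomm]; ring
  rw [hval]
  exact key.2.const_mul (1 / 2)
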